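/- For every real number x > 0, the Riesz function satisfies R(x) = x·(6/π² + ∑_{n=1}^∞ (μ(n)/n²)(exp(-x/n²) - 1)), and the series on the right converges absolutely. -/

import Mathlib

open ArithmeticFunction

/-- The real value of the Riemann zeta function at a real argument. -/
noncomputable def zetaR (s : ℝ) : ℝ := (riemannZeta (s : ℂ)).re

/-- The Riesz function `R(x) = x ∑_{k=0}^∞ (-1)^k x^k / (k! ζ(2k+2))`. -/
noncomputable def RieszR (x : ℝ) : ℝ :=
  x * ∑' k : ℕ, (-1 : ℝ) ^ k * x ^ k / (k.factorial * zetaR (2 * k + 2))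

lemma sum_inv_pow (m : ℕ) (hm : 2 ≤ m) :
    Summable (fun n : ℕ => 1 / ((n : ℝ) + 1) ^ m) := by
  have h2 : Summable (fun n : ℕ => 1 / ((n : ℝ) + 1) ^ 2) := by
    have := (Real.summable_one_div_nat_pow (p := 2)).mpr one_lt_two
    have := (summable_nat_add_iff 1).mpr this
    exact this.congr (by intro n; push_cast; ring_nf)
  refine h2.of_nonneg_of_le (fun n => by positivity) (fun n => ?_)
  have h1 : (1 : ℝ) ≤ (n : ℝ) + 1 := by simp [Nat.cast_nonneg]
  have : ((n : ℝ) + 1) ^ 2 ≤ ((n : ℝ) + 1) ^ m := pow_le_pow_right₀ h1 hm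
  exact one_div_le_one_div_of_le (by positivity) this

lemma zetaC_eq (m : ℕ) (hm : 2 ≤ m) :
    riemannZeta (m : ℂ) = ((∑' n : ℕ, 1 / ((n : ℝ) + 1) ^ m : ℝ) : ℂ) := by
  have hre : 1 < (m : ℂ).re := by
    simp only [Complex.natCast_re]
    exact_mod_cast hm.trans_lt' one_lt_two
  rw [zeta_eq_tsum_one_div_nat_add_one_cpow hre, Complex.ofReal_tsum]
  refine tsum_congr fun n => ?_
  rw [show ((n : ℂ) + 1) = ((n + 1 : ℕ) : ℂ) by push_cast; ring, Complex.cpow_natCast]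
  push_cast
  ring

lemma zetaR_eq (m : ℕ) (hm : 2 ≤ m) :
    (riemannZeta ((m : ℝ) : ℂ)).re = ∑' n : ℕ, 1 / ((n : ℝ) + 1) ^ m := by
  rw [Complex.ofReal_natCast, zetaC_eq m hm, Complex.ofReal_re]

lemma moebius_abs_le (n : ℕ) : |((moebius (n + 1) : ℤ) : ℝ)| ≤ 1 := by
  rw [← Int.cast_abs]
  exact_mod_cast abs_moebius_le_one

lemma moebius_summable (m : ℕ) (hm : 2 ≤ m) :
    Summable (fun n : ℕ => ((moebius (n + 1) : ℤ) : ℝ) / ((n : ℝ) + 1) ^ m) := by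
  rw [← summable_abs_iff]
  refine (sum_inv_pow m hm).of_nonneg_of_le (fun n => abs_nonneg _) (fun n => ?_)
  rw [abs_div, abs_of_nonneg (by positivity : (0:ℝ) ≤ ((n:ℝ)+1)^m)]
  gcongr
  exact moebius_abs_le n

lemma moebius_mul_zeta (m : ℕ) (hm : 2 ≤ m) :
    (∑' n : ℕ, ((moebius (n + 1) : ℤ) : ℝ) / ((n : ℝ) + 1) ^ m) *
      (∑' n : ℕ, 1 / ((n : ℝ) + 1) ^ m) = 1 := by
  have hre : 1 < (m : ℂ).re := by
    simp only [Complex.natCast_re]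
    exact_mod_cast hm.trans_lt' one_lt_two
  have hμ : LSeries (fun n => ((moebius n : ℤ) : ℂ)) (m : ℂ) =
      ((∑' n : ℕ, ((moebius (n + 1) : ℤ) : ℝ) / ((n : ℝ) + 1) ^ m : ℝ) : ℂ) := by
    have hsum : LSeriesSummable (fun n => ((moebius n : ℤ) : ℂ)) (m : ℂ) :=
      LSeriesSummable_moebius_iff.mpr hre
    rw [LSeries, Summable.tsum_eq_zero_add hsum, LSeries.term_zero, zero_add, Complex.ofReal_tsum]
    refine tsum_congr fun n => ?_
    rw [LSeries.term_of_ne_zero (Nat.succ_ne_zero n)]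
    rw [show ((n + 1 : ℕ) : ℂ) ^ ((m : ℕ) : ℂ) = ((n : ℂ) + 1) ^ m by
      rw [show ((n + 1 : ℕ) : ℂ) = ((n : ℂ) + 1) by push_cast; ring, Complex.cpow_natCast]]
    push_cast
    ring
  have h2 := LSeries_zeta_mul_Lseries_moebius hre
  rw [LSeries_zeta_eq_riemannZeta hre, zetaC_eq m hm, hμ] at h2
  exact_mod_cast (mul_comm _ _).trans h2

lemma exp_tsum (y : ℝ) : ∑' k : ℕ, y ^ k / (k.factorial : ℝ) = Real.exp y := by
  rw [Real.exp_eq_exp_ℝ, NormedSpace.exp_eq_tsum_div]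

lemma zeta_pos (m : ℕ) (hm : 2 ≤ m) : 0 < ∑' n : ℕ, 1 / ((n : ℝ) + 1) ^ m :=
  Summable.tsum_pos (sum_inv_pow m hm) (fun n => by positivity) 0 (by norm_num)

theorem stmt16 (x : ℝ) (hx : 0 < x) :
    Summable (fun n : ℕ =>
      |((moebius (n + 1) : ℤ) : ℝ) / ((n : ℝ) + 1) ^ 2 *
        (Real.exp (-x / ((n : ℝ) + 1) ^ 2) - 1)|) ∧
    RieszR x =
      x * (6 / Real.pi ^ 2 + ∑' n : ℕ,
        ((moebius (n + 1) : ℤ) : ℝ) / ((n : ℝ) + 1) ^ 2 *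
          (Real.exp (-x / ((n : ℝ) + 1) ^ 2) - 1)) := by
  set a : ℕ → ℝ := fun n => ((moebius (n + 1) : ℤ) : ℝ) with ha
  have hbase := sum_inv_pow 2 le_rfl
  have hnpos : ∀ n : ℕ, (0:ℝ) < ((n:ℝ)+1)^2 := fun n => by positivity
  have hn1 : ∀ n : ℕ, (1:ℝ) ≤ ((n:ℝ)+1)^2 := fun n => by
    have : (1:ℝ) ≤ (n:ℝ)+1 := by simp [Nat.cast_nonneg]
    nlinarith
  -- exp bound
  have hexp : ∀ n : ℕ, |Real.exp (-x / ((n : ℝ) + 1) ^ 2) - 1| ≤ x / ((n:ℝ)+1)^2 := by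
    intro n
    set t := x / ((n:ℝ)+1)^2 with ht
    have ht0 : 0 ≤ t := by positivity
    have h1 : Real.exp (-t) ≤ 1 := by
      calc Real.exp (-t) ≤ Real.exp 0 := Real.exp_le_exp.mpr (by linarith)
        _ = 1 := Real.exp_zero
    have h2 : 1 - t ≤ Real.exp (-t) := by
      have := Real.add_one_le_exp (-t)
      linarith
    rw [show -x / ((n:ℝ)+1)^2 = -t by rw [ht]; ring, abs_sub_comm,
      abs_of_nonneg (by linarith)]
    linarith
  -- part 1
  have habs : Summable (fun n : ℕ => |a n / ((n : ℝ) + 1) ^ 2 *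
      (Real.exp (-x / ((n : ℝ) + 1) ^ 2) - 1)|) := by
    refine (hbase.mul_left x).of_nonneg_of_le (fun n => abs_nonneg _) (fun n => ?_)
    rw [abs_mul]
    have hle1 : |a n / ((n:ℝ)+1)^2| ≤ 1 := by
      rw [abs_div, abs_of_nonneg (hnpos n).le]
      calc |a n| / ((n:ℝ)+1)^2 ≤ 1 / ((n:ℝ)+1)^2 := by gcongr; exact moebius_abs_le n
        _ ≤ 1 := by rw [div_le_one (hnpos n)]; exact hn1 n
    calc |a n / ((n:ℝ)+1)^2| * |Real.exp (-x / ((n : ℝ) + 1) ^ 2) - 1|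
        ≤ 1 * (x / ((n:ℝ)+1)^2) :=
          mul_le_mul hle1 (hexp n) (abs_nonneg _) zero_le_one
      _ = x * (1 / ((n:ℝ)+1)^2) := by ring
  refine ⟨habs, ?_⟩
  have hT : Summable (fun n : ℕ => a n / ((n : ℝ) + 1) ^ 2 *
      (Real.exp (-x / ((n : ℝ) + 1) ^ 2) - 1)) := summable_abs_iff.mp habs
  -- the double sums
  set F : ℕ → ℕ → ℝ := fun k n =>
    (-x / ((n:ℝ)+1)^2) ^ k / (k.factorial : ℝ) * (a n / ((n:ℝ)+1)^2) with hF
  have hFval : ∀ k n, F k n =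
      (a n / ((n:ℝ)+1)^(2*k+2)) * ((-1:ℝ)^k * x^k / (k.factorial : ℝ)) := by
    intro k n
    have hpow : (((n:ℝ)+1)^2)^k * ((n:ℝ)+1)^2 = ((n:ℝ)+1)^(2*k+2) := by
      rw [← pow_mul, ← pow_add]
    simp only [hF]
    rw [div_pow, neg_pow, ← hpow, ← div_div]
    ring
  have hFsummable : Summable (Function.uncurry F) := by
    rw [← summable_abs_iff]
    have hprod : Summable (fun p : ℕ × ℕ =>
        (x ^ p.1 / (p.1.factorial : ℝ)) * (1 / ((p.2:ℝ)+1)^2)) := by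
      apply Summable.mul_of_nonneg (Real.summable_pow_div_factorial x) hbase
      · intro k; positivity
      · intro n; positivity
    refine hprod.of_nonneg_of_le (fun p => abs_nonneg _) (fun p => ?_)
    obtain ⟨k, n⟩ := p
    simp only [Function.uncurry, hF]
    rw [abs_mul, abs_div, abs_div, abs_pow, abs_div]
    have h1 : (|(-x)| / |((n:ℝ)+1)^2|) ^ k ≤ x ^ k := by
      rw [abs_neg, abs_of_pos hx, abs_of_pos (hnpos n), div_pow]
      exact div_le_self (by positivity) (one_le_pow₀ (hn1 n))
    have h2 : |a n| / |((n:ℝ)+1)^2| ≤ 1 / ((n:ℝ)+1)^2 := by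
      rw [abs_of_pos (hnpos n)]
      gcongr
      exact moebius_abs_le n
    have h3 : |(k.factorial : ℝ)| = (k.factorial : ℝ) := abs_of_pos (by positivity)
    have hk0 : (0:ℝ) < (k.factorial : ℝ) := by positivity
    rw [h3]
    refine mul_le_mul ((div_le_div_iff_of_pos_right hk0).mpr h1) h2 (by positivity) (by positivity)
  -- zetaR values
  have hz : ∀ k : ℕ, zetaR (2*(k:ℝ)+2) = ∑' n : ℕ, 1 / ((n:ℝ)+1)^(2*k+2) := by
    intro k
    have hc : (2*(k:ℝ)+2) = (((2*k+2 : ℕ) : ℝ)) := by push_cast; ring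
    rw [zetaR, hc, zetaR_eq (2*k+2) (by omega)]
  have hMk : ∀ k : ℕ, (∑' n : ℕ, a n / ((n:ℝ)+1)^(2*k+2)) =
      (zetaR (2*(k:ℝ)+2))⁻¹ := by
    intro k
    rw [hz k]
    have h := moebius_mul_zeta (2*k+2) (by omega)
    rw [mul_comm] at h
    exact eq_inv_of_mul_eq_one_left ((mul_comm _ _).trans h)
  -- term k = ∑' n, F k n
  have hterm : ∀ k : ℕ, (-1 : ℝ) ^ k * x ^ k / ((k.factorial : ℝ) * zetaR (2 * (k:ℝ) + 2))
      = ∑' n : ℕ, F k n := by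
    intro k
    have hsum := (tsum_congr (L := SummationFilter.unconditional ℕ) (hFval k)).trans
      (tsum_mul_right (f := fun n => a n / ((n:ℝ)+1)^(2*k+2)))
    rw [hsum, hMk k]
    ring
  -- ∑' k F k n = exp
  have hcol : ∀ n : ℕ, (∑' k : ℕ, F k n) =
      a n / ((n:ℝ)+1)^2 * Real.exp (-x / ((n:ℝ)+1)^2) := by
    intro n
    rw [hF]
    rw [tsum_mul_right, exp_tsum]
    ring
  -- assemble
  rw [RieszR]
  have hswap : (∑' k : ℕ, ∑' n : ℕ, F k n) = ∑' n : ℕ, ∑' k : ℕ, F k n :=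
    (Summable.tsum_comm hFsummable).symm
  have hM2 : (∑' n : ℕ, a n / ((n:ℝ)+1)^2) = 6 / Real.pi ^ 2 := by
    have hZ2 : (∑' n : ℕ, 1 / ((n:ℝ)+1)^2) = Real.pi ^ 2 / 6 := by
      have h := zetaC_eq 2 le_rfl
      rw [show ((2:ℕ):ℂ) = (2:ℂ) by norm_num, riemannZeta_two] at h
      have : ((Real.pi ^ 2 / 6 : ℝ) : ℂ) = ((∑' n : ℕ, 1 / ((n:ℝ)+1)^2 : ℝ) : ℂ) := by
        rw [← h]; push_cast; ring
      exact_mod_cast this.symm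
    have h := moebius_mul_zeta 2 le_rfl
    rw [hZ2] at h
    have : (∑' n : ℕ, a n / ((n:ℝ)+1)^2) = (Real.pi ^ 2 / 6)⁻¹ :=
      eq_inv_of_mul_eq_one_left ((mul_comm _ _).trans ((mul_comm _ _).trans h))
    rw [this, inv_div]
  have hsplit : (∑' n : ℕ, a n / ((n:ℝ)+1)^2 * Real.exp (-x / ((n:ℝ)+1)^2)) =
      (∑' n : ℕ, a n / ((n:ℝ)+1)^2) +
      ∑' n : ℕ, a n / ((n:ℝ)+1)^2 * (Real.exp (-x / ((n:ℝ)+1)^2) - 1) := by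
    rw [← Summable.tsum_add (moebius_summable 2 le_rfl) hT]
    refine tsum_congr fun n => ?_
    ring
  calc x * ∑' k : ℕ, (-1 : ℝ) ^ k * x ^ k / ((k.factorial : ℝ) * zetaR (2 * (k:ℝ) + 2))
      = x * ∑' k : ℕ, ∑' n : ℕ, F k n := by rw [tsum_congr hterm]
    _ = x * ∑' n : ℕ, ∑' k : ℕ, F k n := by rw [hswap]
    _ = x * ∑' n : ℕ, a n / ((n:ℝ)+1)^2 * Real.exp (-x / ((n:ℝ)+1)^2) := by
        rw [tsum_congr hcol]
    _ = x * (6 / Real.pi ^ 2 + ∑' n : ℕ, a n / ((n:ℝ)+1)^2 *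
          (Real.exp (-x / ((n:ℝ)+1)^2) - 1)) := by rw [hsplit, hM2]
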